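/- Let n ≥ 2 and let N be an n×n matrix over ℤ with entries in {0,1} and N² = 0. Set C = I − N, φ(X) = det(X•C + Cᵀ), a₂ = φ.coeff(n−2), e = Σ_{i,j} N_{ij}, d_i = Σ_j N_{ij} + Σ_j N_{ji}, q = Σ_{i<j} C((N·Nᵀ)_{ij}, 2), and let v = |{i : d_i = 0}| be the number of isolated vertices. Then 2·a₂ = (n−e)(n+1−e) − 2v − 4q − Σ_{i : d_i > 0} (d_i−1)(d_i−2). -/

import Mathlib

open Polynomial Matrix Finset

lemma pair_eq {n : ℕ} {a b c d : Fin n} (hab : a < b) (hcd : c < d)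
    (h : ({a, b} : Finset (Fin n)) = {c, d}) : a = c ∧ b = d := by
  have ha : a ∈ ({c, d} : Finset (Fin n)) := h ▸ by simp
  have hb : b ∈ ({c, d} : Finset (Fin n)) := h ▸ by simp
  have hc : c ∈ ({a, b} : Finset (Fin n)) := h.symm ▸ by simp
  simp only [Finset.mem_insert, Finset.mem_singleton] at ha hb hc
  simp only [Fin.ext_iff, Fin.lt_def] at *
  omega

lemma key {n : ℕ} (hn : 2 ≤ n) (A : Matrix (Fin n) (Fin n) ℤ) :
    (((X : ℤ[X]) • (1 : Matrix (Fin n) (Fin n) ℤ[X]) + A.map Polynomial.C).det).coeff (n - 2)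
      = (∑ p ∈ (Finset.univ.filter (fun p : Fin n × Fin n => p.1 < p.2)),
          A p.1 p.1 * A p.2 p.2)
        - ∑ p ∈ (Finset.univ.filter (fun p : Fin n × Fin n => p.1 < p.2)),
          A p.2 p.1 * A p.1 p.2 := by
  classical
  set B : Matrix (Fin n) (Fin n) ℤ[X] :=
    (X : ℤ[X]) • (1 : Matrix (Fin n) (Fin n) ℤ[X]) + A.map Polynomial.C with hBdef
  have hB : ∀ i j, B i j = (if i = j then (X : ℤ[X]) else 0) + Polynomial.C (A i j) := by
    intro i j
    by_cases h : i = j <;>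
      simp [hBdef, Matrix.add_apply, Matrix.smul_apply, Matrix.one_apply, Matrix.map_apply, h,
        smul_eq_mul]
  set S : Finset (Fin n × Fin n) := Finset.univ.filter (fun p : Fin n × Fin n => p.1 < p.2)
    with hSdef
  -- the determinant as a sum over permutations
  rw [Matrix.det_apply', Polynomial.finset_sum_coeff]
  -- coefficient of a single permutation term
  have hbig : ∀ σ : Equiv.Perm (Fin n), ¬ σ.support.card ≤ 2 →
      (∏ i, B (σ i) i).coeff (n - 2) = 0 := by
    intro σ hσ
    push_neg at hσ
    apply Polynomial.coeff_eq_zero_of_natDegree_lt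
    have h1 : (∏ i, B (σ i) i)
        = (∏ i ∈ σ.support, B (σ i) i) * ∏ i ∈ σ.supportᶜ, B (σ i) i :=
      (Finset.prod_mul_prod_compl _ _).symm
    have h2 : ∀ i ∈ σ.supportᶜ, B (σ i) i = X + Polynomial.C (A i i) := by
      intro i hi
      have hfix : σ i = i := by
        have := Finset.mem_compl.mp hi
        simpa [Equiv.Perm.mem_support] using this
      rw [hfix, hB, if_pos rfl]
    have h3 : ∀ i ∈ σ.support, B (σ i) i = Polynomial.C (A (σ i) i) := by
      intro i hi
      rw [hB, if_neg (Equiv.Perm.mem_support.mp hi), zero_add]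
    rw [h1, Finset.prod_congr rfl h3, Finset.prod_congr rfl h2]
    have hd1 : (∏ i ∈ σ.support, Polynomial.C (A (σ i) i)).natDegree = 0 := by
      rw [← map_prod]; exact Polynomial.natDegree_C _
    have hd2 : (∏ i ∈ σ.supportᶜ, (X + Polynomial.C (A i i))).natDegree ≤ σ.supportᶜ.card := by
      refine le_trans (Polynomial.natDegree_prod_le _ _) ?_
      refine le_trans (Finset.sum_le_card_nsmul _ _ 1 ?_) (by simp)
      intro i _
      exact le_of_eq (Polynomial.natDegree_X_add_C _)
    have hcard : σ.supportᶜ.card = n - σ.support.card := by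
      rw [Finset.card_compl, Fintype.card_fin]
    have hle : σ.support.card ≤ n := le_trans (Finset.card_le_univ _) (by simp)
    have := Polynomial.natDegree_mul_le (p := ∏ i ∈ σ.support, Polynomial.C (A (σ i) i))
      (q := ∏ i ∈ σ.supportᶜ, (X + Polynomial.C (A i i)))
    omega
  -- identity permutation
  have hid : (∏ i, B (((1 : Equiv.Perm (Fin n))) i) i).coeff (n - 2)
      = ∑ p ∈ S, A p.1 p.1 * A p.2 p.2 := by
    have h2 : ∀ i ∈ (Finset.univ : Finset (Fin n)), B (((1 : Equiv.Perm (Fin n))) i) i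
        = X + Polynomial.C (A i i) := by
      intro i _
      show B i i = _
      rw [hB, if_pos rfl]
    rw [Finset.prod_congr rfl h2]
    have hkle : n - 2 ≤ (Finset.univ : Finset (Fin n)).card := by simp [Nat.sub_le]
    rw [Finset.prod_X_add_C_coeff _ _ hkle]
    have hcard : (Finset.univ : Finset (Fin n)).card - (n - 2) = 2 := by
      simp only [Finset.card_fin]; omega
    rw [hcard]
    have himg : (Finset.univ : Finset (Fin n)).powersetCard 2
        = S.image (fun p => ({p.1, p.2} : Finset (Fin n))) := by
      ext t
      simp only [Finset.mem_powersetCard_univ, Finset.mem_image, hSdef, Finset.mem_filter,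
        Finset.mem_univ, true_and]
      constructor
      · intro h2c
        obtain ⟨x, y, hxy, rfl⟩ := Finset.card_eq_two.mp h2c
        rcases hxy.lt_or_gt with h | h
        · exact ⟨(x, y), h, rfl⟩
        · exact ⟨(y, x), h, by rw [Finset.pair_comm]⟩
      · rintro ⟨⟨x, y⟩, hxy, rfl⟩
        exact Finset.card_pair hxy.ne
    rw [himg, Finset.sum_image (fun p hp q hq hpq => ?_)]
    · refine Finset.sum_congr rfl fun p hp => ?_
      have hlt : p.1 < p.2 := by
        rw [hSdef] at hp; exact (Finset.mem_filter.mp hp).2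
      exact Finset.prod_pair hlt.ne
    · have hp1 : p.1 < p.2 := by rw [hSdef] at hp; exact (Finset.mem_filter.mp hp).2
      have hq1 : q.1 < q.2 := by rw [hSdef] at hq; exact (Finset.mem_filter.mp hq).2
      obtain ⟨h1, h2⟩ := pair_eq hp1 hq1 hpq
      exact Prod.ext h1 h2
  -- swap permutations
  have hswap : ∀ p ∈ S, (∏ i, B ((Equiv.swap p.1 p.2) i) i).coeff (n - 2)
      = A p.2 p.1 * A p.1 p.2 := by
    rintro ⟨a, b⟩ hp
    have hab : a < b := by rw [hSdef] at hp; exact (Finset.mem_filter.mp hp).2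
    have hne : a ≠ b := hab.ne
    have h1 : (∏ i, B ((Equiv.swap a b) i) i)
        = (∏ i ∈ ({a, b} : Finset (Fin n)), B ((Equiv.swap a b) i) i)
          * ∏ i ∈ ({a, b} : Finset (Fin n))ᶜ, B ((Equiv.swap a b) i) i :=
      (Finset.prod_mul_prod_compl _ _).symm
    have h2 : ∀ i ∈ ({a, b} : Finset (Fin n))ᶜ, B ((Equiv.swap a b) i) i
        = X + Polynomial.C (A i i) := by
      intro i hi
      simp only [Finset.mem_compl, Finset.mem_insert, Finset.mem_singleton, not_or] at hi
      rw [Equiv.swap_apply_of_ne_of_ne hi.1 hi.2, hB, if_pos rfl]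
    have h3 : (∏ i ∈ ({a, b} : Finset (Fin n)), B ((Equiv.swap a b) i) i)
        = Polynomial.C (A b a * A a b) := by
      rw [Finset.prod_pair hne, Equiv.swap_apply_left, Equiv.swap_apply_right,
        hB, hB, if_neg hne.symm, if_neg hne, zero_add, zero_add, ← Polynomial.C_mul]
    rw [h1, h3, Finset.prod_congr rfl h2, Polynomial.coeff_C_mul]
    have hmonic : (∏ i ∈ ({a, b} : Finset (Fin n))ᶜ, (X + Polynomial.C (A i i))).Monic :=
      Polynomial.monic_prod_of_monic _ _ fun i _ => Polynomial.monic_X_add_C _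
    have hdeg : (∏ i ∈ ({a, b} : Finset (Fin n))ᶜ, (X + Polynomial.C (A i i))).natDegree
        = n - 2 := by
      rw [Polynomial.natDegree_prod_of_monic _ _ fun i _ => Polynomial.monic_X_add_C _]
      simp only [Polynomial.natDegree_X_add_C]
      rw [Finset.sum_const, smul_eq_mul, mul_one, Finset.card_compl, Fintype.card_fin,
        Finset.card_pair hne]
    rw [← hdeg, hmonic.coeff_natDegree, mul_one]
  -- assemble
  have hterm : ∀ σ : Equiv.Perm (Fin n),
      ((↑↑(Equiv.Perm.sign σ) : ℤ[X]) * ∏ i, B (σ i) i).coeff (n - 2)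
        = ((Equiv.Perm.sign σ : ℤ)) * (∏ i, B (σ i) i).coeff (n - 2) := by
    intro σ
    rw [show ((↑↑(Equiv.Perm.sign σ) : ℤ[X])) = Polynomial.C ((Equiv.Perm.sign σ : ℤ)) from
      Polynomial.C_eq_intCast _, Polynomial.coeff_C_mul]
  simp only [hterm]
  rw [← Finset.sum_filter_add_sum_filter_not Finset.univ
    (fun σ : Equiv.Perm (Fin n) => σ.support.card ≤ 2)
    (fun σ => ((Equiv.Perm.sign σ : ℤ)) * (∏ i, B (σ i) i).coeff (n - 2))]
  have hzero : ∑ σ ∈ Finset.univ.filter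
      (fun σ : Equiv.Perm (Fin n) => ¬ σ.support.card ≤ 2),
      ((Equiv.Perm.sign σ : ℤ)) * (∏ i, B (σ i) i).coeff (n - 2) = 0 := by
    refine Finset.sum_eq_zero fun σ hσ => ?_
    rw [hbig σ (Finset.mem_filter.mp hσ).2, mul_zero]
  rw [hzero, add_zero]
  have hset : Finset.univ.filter (fun σ : Equiv.Perm (Fin n) => σ.support.card ≤ 2)
      = insert 1 (S.image fun p => Equiv.swap p.1 p.2) := by
    ext σ
    simp only [Finset.mem_filter, Finset.mem_univ, true_and, Finset.mem_insert,
      Finset.mem_image]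
    constructor
    · intro h
      have hne1 := σ.card_support_ne_one
      rcases (show σ.support.card = 0 ∨ σ.support.card = 2 by omega) with h0 | h2
      · left
        rwa [Finset.card_eq_zero, Equiv.Perm.support_eq_empty_iff] at h0
      · right
        obtain ⟨x, y, hxy, rfl⟩ := Equiv.Perm.card_support_eq_two.mp h2
        rcases hxy.lt_or_gt with hlt | hlt
        · exact ⟨(x, y), by simp [hSdef, hlt], rfl⟩
        · exact ⟨(y, x), by simp [hSdef, hlt], (Equiv.swap_comm x y) ▸ rfl⟩
    · rintro (rfl | ⟨p, hp, rfl⟩)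
      · simp
      · have hne : p.1 ≠ p.2 := by
          rw [hSdef] at hp; exact (Finset.mem_filter.mp hp).2.ne
        rw [Equiv.Perm.card_support_eq_two.mpr ⟨p.1, p.2, hne, rfl⟩]
  have hnotmem : (1 : Equiv.Perm (Fin n)) ∉ S.image fun p => Equiv.swap p.1 p.2 := by
    rintro hmem
    obtain ⟨p, hp, heq⟩ := Finset.mem_image.mp hmem
    have hne : p.1 ≠ p.2 := by
      rw [hSdef] at hp; exact (Finset.mem_filter.mp hp).2.ne
    have h2 := Equiv.Perm.card_support_eq_two.mpr ⟨p.1, p.2, hne, rfl⟩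
    rw [heq] at h2
    simp at h2
  rw [hset, Finset.sum_insert hnotmem, Finset.sum_image (fun p hp q hq hpq => ?_)]
  · rw [hid]
    have hswap' : ∀ p ∈ S, ((Equiv.Perm.sign (Equiv.swap p.1 p.2) : ℤ))
        * (∏ i, B ((Equiv.swap p.1 p.2) i) i).coeff (n - 2)
          = -(A p.2 p.1 * A p.1 p.2) := by
      intro p hp
      have hne : p.1 ≠ p.2 := by
        rw [hSdef] at hp; exact (Finset.mem_filter.mp hp).2.ne
      rw [hswap p hp, Equiv.Perm.sign_swap hne]
      push_cast
      ring
    rw [Finset.sum_congr rfl hswap']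
    simp only [Equiv.Perm.sign_one, Units.val_one, Int.cast_one, one_mul,
      Finset.sum_neg_distrib]
    ring
  · have hp1 : p.1 < p.2 := by rw [hSdef] at hp; exact (Finset.mem_filter.mp hp).2
    have hq1 : q.1 < q.2 := by rw [hSdef] at hq; exact (Finset.mem_filter.mp hq).2
    have hsup : ({p.1, p.2} : Finset (Fin n)) = {q.1, q.2} := by
      rw [← Equiv.Perm.support_swap hp1.ne, ← Equiv.Perm.support_swap hq1.ne, hpq]
    obtain ⟨h1, h2⟩ := pair_eq hp1 hq1 hsup
    exact Prod.ext h1 h2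

-- symmetric double sum split
lemma dss {n : ℕ} (g : Fin n → Fin n → ℤ) (hg : ∀ i j, g i j = g j i) :
    ∑ i, ∑ j, g i j = (∑ i, g i i) + 2 * ∑ i, ∑ j, (if i < j then g i j else 0) := by
  have h : ∀ i j : Fin n, g i j =
      (if i < j then g i j else 0) + (if j < i then g i j else 0) +
        (if i = j then g i j else 0) := by
    intro i j
    rcases lt_trichotomy i j with h | h | h
    · simp [h, h.ne, not_lt.2 h.le]
    · simp [h]
    · simp [h, h.ne', not_lt.2 h.le]
  calc ∑ i, ∑ j, g i j
      = ∑ i : Fin n, ∑ j : Fin n, ((if i < j then g i j else 0) + (if j < i then g i j else 0) +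
        (if i = j then g i j else 0)) := by
        refine Finset.sum_congr rfl fun i _ => Finset.sum_congr rfl fun j _ => h i j
    _ = (∑ i, g i i) + 2 * ∑ i, ∑ j, (if i < j then g i j else 0) := by
        simp only [Finset.sum_add_distrib]
        have h1 : ∑ i : Fin n, ∑ j : Fin n, (if j < i then g i j else 0)
            = ∑ i : Fin n, ∑ j : Fin n, (if i < j then g i j else 0) := by
          rw [Finset.sum_comm]
          exact Finset.sum_congr rfl fun i _ => Finset.sum_congr rfl fun j _ => by
            by_cases h : i < j <;> simp [h, hg]
        have h2 : ∑ i : Fin n, ∑ j : Fin n, (if i = j then g i j else 0) = ∑ i, g i i := by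
          simp
        rw [h1, h2]; ring

lemma sumS_eq {n : ℕ} (f : Fin n → Fin n → ℤ) :
    ∑ p ∈ (Finset.univ.filter (fun p : Fin n × Fin n => p.1 < p.2)), f p.1 p.2
      = ∑ i, ∑ j, (if i < j then f i j else 0) := by
  rw [Finset.sum_filter]
  exact Fintype.sum_prod_type _

lemma key2 {n : ℕ} (hn : 2 ≤ n) (A : Matrix (Fin n) (Fin n) ℤ) :
    2 * (((X : ℤ[X]) • (1 : Matrix (Fin n) (Fin n) ℤ[X]) + A.map Polynomial.C).det).coeff (n - 2)
      = (Matrix.trace A) ^ 2 - Matrix.trace (A * A) := by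
  rw [key hn A, sumS_eq (fun i j => A i i * A j j), sumS_eq (fun i j => A j i * A i j)]
  have e1 : (Matrix.trace A) ^ 2 = ∑ i, ∑ j, A i i * A j j := by
    rw [Matrix.trace, pow_two, Finset.sum_mul_sum]
    rfl
  have e2 : Matrix.trace (A * A) = ∑ i, ∑ j, A i j * A j i := by
    simp [Matrix.trace, Matrix.mul_apply, Matrix.diag]
  have d1 := dss (fun i j => A i i * A j j) (fun i j => mul_comm _ _)
  have d2 := dss (fun i j => A i j * A j i) (fun i j => mul_comm _ _)
  have e3 : ∑ i : Fin n, ∑ j : Fin n, (if i < j then A j i * A i j else 0)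
      = ∑ i : Fin n, ∑ j : Fin n, (if i < j then A i j * A j i else 0) := by
    refine Finset.sum_congr rfl fun i _ => Finset.sum_congr rfl fun j _ => by
      by_cases h : i < j <;> simp [h, mul_comm]
  rw [e1, e2, e3, d1, d2]
  ring

lemma det_one_sub {n : ℕ} (N : Matrix (Fin n) (Fin n) ℤ) (hN2 : N * N = 0) :
    (1 - N).det = 1 := by
  set B : Matrix (Fin n) (Fin n) ℤ[X] :=
    (1 : Matrix (Fin n) (Fin n) ℤ[X]) - (X : ℤ[X]) • N.map Polynomial.C with hBdef
  set p : ℤ[X] := B.det with hpdef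
  have hmm : (N.map (Polynomial.C : ℤ → ℤ[X])) * (N.map (Polynomial.C : ℤ → ℤ[X])) = 0 := by
    rw [← Matrix.map_mul, hN2]
    ext i j
    simp
  have hmul : p * ((1 : Matrix (Fin n) (Fin n) ℤ[X]) + (X : ℤ[X]) • N.map Polynomial.C).det
      = 1 := by
    rw [hpdef, ← Matrix.det_mul, hBdef]
    have h : ((1 : Matrix (Fin n) (Fin n) ℤ[X]) - (X : ℤ[X]) • N.map Polynomial.C)
        * ((1 : Matrix (Fin n) (Fin n) ℤ[X]) + (X : ℤ[X]) • N.map Polynomial.C) = 1 := by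
      have h2 : ((X : ℤ[X]) • N.map Polynomial.C) * ((X : ℤ[X]) • N.map Polynomial.C) = 0 := by
        rw [Matrix.smul_mul, Matrix.mul_smul, hmm, smul_zero, smul_zero]
      rw [sub_mul, mul_add, mul_add, one_mul, one_mul, h2, mul_one]
      abel
    rw [h, Matrix.det_one]
  obtain ⟨r, -, hrp⟩ := Polynomial.isUnit_iff.mp (IsUnit.of_mul_eq_one _ hmul)
  have heval : ∀ x : ℤ, Polynomial.eval x p = (B.map (Polynomial.evalRingHom x)).det := by
    intro x
    rw [hpdef]
    exact RingHom.map_det (Polynomial.evalRingHom x) B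
  have h0 : Polynomial.eval 0 p = 1 := by
    rw [heval 0]
    have : B.map (Polynomial.evalRingHom 0) = 1 := by
      ext i j
      by_cases h : i = j <;>
        simp [hBdef, Matrix.map_apply, Matrix.sub_apply, Matrix.smul_apply, Matrix.one_apply, h,
          smul_eq_mul]
    rw [this, Matrix.det_one]
  have h1 : Polynomial.eval 1 p = (1 - N).det := by
    rw [heval 1]
    congr 1
    ext i j
    by_cases h : i = j <;>
      simp [hBdef, Matrix.map_apply, Matrix.sub_apply, Matrix.smul_apply, Matrix.one_apply, h,
        smul_eq_mul]
  rw [← hrp] at h0 h1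
  simp only [Polynomial.eval_C] at h0 h1
  rw [← h1, h0]

lemma choose2 (m : ℤ) (hm : 0 ≤ m) : 2 * ((m.toNat.choose 2 : ℕ) : ℤ) = m * m - m := by
  have h : ∀ t : ℕ, 2 * t.choose 2 + t = t * t := by
    intro t
    induction t with
    | zero => rfl
    | succ k ih =>
      rw [Nat.choose_succ_succ, Nat.choose_one_right]
      nlinarith [ih]
  have := h m.toNat
  zify at this
  rw [Int.toNat_of_nonneg hm] at this
  linarith
/-- Theorem 1.1, variant (1.2) of the paper: the second coefficient of the Coxeter
polynomial of a bipartite quiver without parallel arrows, expressed via the number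
`v` of isolated vertices. -/
theorem coxeter_second_coeff_bipartite_quiver_variant (n : ℕ) (hn : 2 ≤ n)
    (N : Matrix (Fin n) (Fin n) ℤ)
    (h01 : ∀ i j, N i j = 0 ∨ N i j = 1) (hN2 : N * N = 0) :
    let C : Matrix (Fin n) (Fin n) ℤ := 1 - N
    let φ : ℤ[X] := ((X : ℤ[X]) • C.map Polynomial.C + Cᵀ.map Polynomial.C).det
    let e : ℤ := ∑ i, ∑ j, N i j
    let d : Fin n → ℤ := fun i => (∑ j, N i j) + (∑ j, N j i)
    let q : ℤ := ∑ i, ∑ j, if i < j then (((N * Nᵀ) i j).toNat.choose 2 : ℤ) else 0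
    let v : ℤ := (Finset.univ.filter (fun i => d i = 0)).card
    2 * φ.coeff (n - 2) =
        (n - e) * (n + 1 - e) - 2 * v - 4 * q -
          ∑ i ∈ Finset.univ.filter (fun i => 0 < d i), (d i - 1) * (d i - 2) := by
  intro C φ e d q v
  have hC : C = 1 - N := rfl
  have hφ : φ = ((X : ℤ[X]) • C.map Polynomial.C + Cᵀ.map Polynomial.C).det := rfl
  have he : e = ∑ i, ∑ j, N i j := rfl
  have hd : ∀ i, d i = (∑ j, N i j) + (∑ j, N j i) := fun _ => rfl
  have hq : q = ∑ i, ∑ j, (if i < j then (((N * Nᵀ) i j).toNat.choose 2 : ℤ) else 0) := rfl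
  have hv : v = ((Finset.univ.filter (fun i => d i = 0)).card : ℤ) := rfl
  -- basic facts
  have h2T : Nᵀ * Nᵀ = 0 := by
    rw [← Matrix.transpose_mul, hN2, Matrix.transpose_zero]
  have hnonneg : ∀ i j, 0 ≤ N i j := fun i j => by rcases h01 i j with h | h <;> simp [h]
  have hsq : ∀ i j, N i j * N i j = N i j := fun i j => by rcases h01 i j with h | h <;> simp [h]
  have hdiag : ∀ i, N i i = 0 := by
    intro i
    have h : (N * N) i i = 0 := by rw [hN2]; simp
    rw [Matrix.mul_apply] at h
    have hz := (Finset.sum_eq_zero_iff_of_nonneg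
      (fun k _ => mul_nonneg (hnonneg i k) (hnonneg k i))).mp h i (Finset.mem_univ i)
    rw [hsq] at hz
    exact hz
  have hab : ∀ i, (∑ j, N i j) * (∑ j, N j i) = 0 := by
    intro i
    by_contra hc
    have ha1 : ∑ j, N i j ≠ 0 := fun h => hc (by rw [h, zero_mul])
    have ha2 : ∑ j, N j i ≠ 0 := fun h => hc (by rw [h, mul_zero])
    obtain ⟨k, -, hk⟩ := Finset.exists_ne_zero_of_sum_ne_zero ha1
    obtain ⟨j, -, hj⟩ := Finset.exists_ne_zero_of_sum_ne_zero ha2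
    have h : (N * N) j k = 0 := by rw [hN2]; simp
    rw [Matrix.mul_apply] at h
    have hz := (Finset.sum_eq_zero_iff_of_nonneg
      (fun m _ => mul_nonneg (hnonneg j m) (hnonneg m k))).mp h i (Finset.mem_univ i)
    rcases mul_eq_zero.mp hz with h' | h'
    · exact hj h'
    · exact hk h'
  -- the Coxeter matrix
  set M : Matrix (Fin n) (Fin n) ℤ := (1 + N) * (1 - Nᵀ) with hM
  have hCM : C * M = Cᵀ := by
    rw [hC, hM, ← mul_assoc]
    have h1 : ((1 : Matrix (Fin n) (Fin n) ℤ) - N) * (1 + N) = 1 := by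
      rw [sub_mul, mul_add, mul_add, one_mul, mul_one, one_mul, hN2]
      abel
    rw [h1, one_mul, Matrix.transpose_sub, Matrix.transpose_one]
  have hfact : (X : ℤ[X]) • C.map Polynomial.C + Cᵀ.map Polynomial.C
      = (C.map Polynomial.C) * ((X : ℤ[X]) • 1 + M.map Polynomial.C) := by
    rw [mul_add, Matrix.mul_smul, mul_one, ← Matrix.map_mul, hCM]
  have hdetC : (C.map (Polynomial.C : ℤ → ℤ[X])).det = 1 := by
    have h := RingHom.map_det (Polynomial.C : ℤ →+* ℤ[X]) C
    rw [RingHom.mapMatrix_apply] at h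
    rw [← h, hC, det_one_sub N hN2, Polynomial.C_1]
  have hφ2 : φ = (((X : ℤ[X]) • 1 + M.map Polynomial.C)).det := by
    rw [hφ, hfact, Matrix.det_mul, hdetC, one_mul]
  have hkey := key2 hn M
  rw [← hφ2] at hkey
  -- traces
  have htr1 : Matrix.trace (1 : Matrix (Fin n) (Fin n) ℤ) = (n : ℤ) := by
    simp [Matrix.trace_one]
  have htrN : Matrix.trace N = 0 := by
    simp [Matrix.trace, Matrix.diag, hdiag]
  have htrNT : Matrix.trace Nᵀ = 0 := by
    rw [Matrix.trace_transpose, htrN]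
  have htrP : Matrix.trace (N * Nᵀ) = e := by
    rw [he, Matrix.trace]
    simp [Matrix.diag, Matrix.mul_apply, Matrix.transpose_apply, hsq]
  have htrTN : Matrix.trace (Nᵀ * N) = e := by
    rw [Matrix.trace_mul_comm, htrP]
  have hMexp : M = 1 + N - Nᵀ - N * Nᵀ := by
    rw [hM, add_mul, one_mul, mul_sub, mul_one]
    abel
  have htrM : Matrix.trace M = (n : ℤ) - e := by
    rw [hMexp, Matrix.trace_sub, Matrix.trace_sub, Matrix.trace_add, htr1, htrN, htrNT, htrP]
    ring
  have hMM : M * M = 1 + (N + N) - (Nᵀ + Nᵀ) - (N * Nᵀ + N * Nᵀ + N * Nᵀ) - Nᵀ * N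
      + Nᵀ * (N * Nᵀ) - N * (Nᵀ * N) + (N * Nᵀ) * (N * Nᵀ) := by
    rw [hMexp]
    have hA : ∀ x : Matrix (Fin n) (Fin n) ℤ, N * (N * x) = 0 := fun x => by
      rw [← mul_assoc, hN2, zero_mul]
    have hB : ∀ x : Matrix (Fin n) (Fin n) ℤ, Nᵀ * (Nᵀ * x) = 0 := fun x => by
      rw [← mul_assoc, h2T, zero_mul]
    simp only [mul_add, add_mul, mul_sub, sub_mul, mul_one, one_mul, mul_assoc, hA, hB, hN2,
      h2T, mul_zero, zero_mul, add_zero, zero_add, sub_zero, zero_sub]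
    abel
  have t1 : Matrix.trace (Nᵀ * (N * Nᵀ)) = 0 := by
    rw [Matrix.trace_mul_comm, mul_assoc, h2T, mul_zero, Matrix.trace_zero]
  have t2 : Matrix.trace (N * (Nᵀ * N)) = 0 := by
    rw [Matrix.trace_mul_comm, mul_assoc, hN2, mul_zero, Matrix.trace_zero]
  have htrMM : Matrix.trace (M * M)
      = (n : ℤ) - 4 * e + Matrix.trace ((N * Nᵀ) * (N * Nᵀ)) := by
    rw [hMM]
    simp only [Matrix.trace_add, Matrix.trace_sub, htr1, htrN, htrNT, htrP, htrTN, t1, t2]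
    ring
  -- facts about P = N * Nᵀ
  have hPsymm : ∀ i j, (N * Nᵀ) i j = (N * Nᵀ) j i := by
    intro i j
    simp only [Matrix.mul_apply, Matrix.transpose_apply]
    exact Finset.sum_congr rfl fun k _ => mul_comm _ _
  have hPdiag : ∀ i, (N * Nᵀ) i i = ∑ j, N i j := by
    intro i
    simp only [Matrix.mul_apply, Matrix.transpose_apply]
    exact Finset.sum_congr rfl fun k _ => hsq i k
  have hPnonneg : ∀ i j, 0 ≤ (N * Nᵀ) i j := by
    intro i j
    rw [Matrix.mul_apply]
    exact Finset.sum_nonneg fun k _ => mul_nonneg (hnonneg i k) (hnonneg j k)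
  have htrPP : Matrix.trace ((N * Nᵀ) * (N * Nᵀ))
      = ∑ i, ∑ j, (N * Nᵀ) i j * (N * Nᵀ) j i := by
    rw [Matrix.trace]
    exact Finset.sum_congr rfl fun i _ => Matrix.mul_apply
  have hdss1 := dss (fun i j => (N * Nᵀ) i j * (N * Nᵀ) j i) (fun i j => mul_comm _ _)
  have hdss2 := dss (fun i j => (N * Nᵀ) i j) hPsymm
  beta_reduce at hdss1 hdss2
  have hcols : ∑ i, ∑ j, (N * Nᵀ) i j = ∑ k, (∑ i, N i k) * (∑ j, N j k) := by
    have h1 : ∀ i, ∑ j, (N * Nᵀ) i j = ∑ k, N i k * (∑ j, N j k) := by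
      intro i
      calc ∑ j, (N * Nᵀ) i j = ∑ j : Fin n, ∑ k, N i k * N j k := by
            refine Finset.sum_congr rfl fun j _ => ?_
            simp [Matrix.mul_apply, Matrix.transpose_apply]
        _ = ∑ k, ∑ j : Fin n, N i k * N j k := Finset.sum_comm
        _ = ∑ k, N i k * ∑ j, N j k := by
            refine Finset.sum_congr rfl fun k _ => (Finset.mul_sum _ _ _).symm
    calc ∑ i, ∑ j, (N * Nᵀ) i j = ∑ i, ∑ k, N i k * (∑ j, N j k) :=
          Finset.sum_congr rfl fun i _ => h1 i
      _ = ∑ k, ∑ i, N i k * (∑ j, N j k) := Finset.sum_comm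
      _ = ∑ k, (∑ i, N i k) * (∑ j, N j k) := by
          refine Finset.sum_congr rfl fun k _ => (Finset.sum_mul _ _ _).symm
  have hite : ∑ i, ∑ j, (if i < j then (N * Nᵀ) i j * (N * Nᵀ) j i else 0)
      = 2 * q + ∑ i, ∑ j, (if i < j then (N * Nᵀ) i j else 0) := by
    have hterm : ∀ i j : Fin n, (if i < j then (N * Nᵀ) i j * (N * Nᵀ) j i else 0)
        = 2 * (if i < j then (((N * Nᵀ) i j).toNat.choose 2 : ℤ) else 0)
          + (if i < j then (N * Nᵀ) i j else 0) := by
      intro i j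
      by_cases h : i < j
      · simp only [if_pos h]
        rw [← hPsymm i j]
        linarith [choose2 ((N * Nᵀ) i j) (hPnonneg i j)]
      · simp [h]
    calc ∑ i, ∑ j, (if i < j then (N * Nᵀ) i j * (N * Nᵀ) j i else 0)
        = ∑ i : Fin n, ∑ j : Fin n,
            (2 * (if i < j then (((N * Nᵀ) i j).toNat.choose 2 : ℤ) else 0)
              + (if i < j then (N * Nᵀ) i j else 0)) :=
          Finset.sum_congr rfl fun i _ => Finset.sum_congr rfl fun j _ => hterm i j
      _ = 2 * q + ∑ i, ∑ j, (if i < j then (N * Nᵀ) i j else 0) := by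
          rw [hq]
          simp only [Finset.sum_add_distrib, Finset.mul_sum]
  have hPdiagsum : ∑ i, (N * Nᵀ) i i = e := by
    rw [he]
    exact Finset.sum_congr rfl fun i _ => hPdiag i
  have heT : e = ∑ k : Fin n, ∑ j : Fin n, N j k := by
    rw [he]; exact Finset.sum_comm
  have hsumd : ∑ i, d i * d i
      = (∑ i, (∑ j, N i j) * (∑ j, N i j)) + ∑ i, (∑ j, N j i) * (∑ j, N j i) := by
    rw [← Finset.sum_add_distrib]
    refine Finset.sum_congr rfl fun i _ => ?_
    rw [hd i]
    linear_combination 2 * hab i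
  have hdnonneg : ∀ i, 0 ≤ d i := by
    intro i
    rw [hd i]
    have h1 : 0 ≤ ∑ j, N i j := Finset.sum_nonneg fun j _ => hnonneg i j
    have h2 : 0 ≤ ∑ j, N j i := Finset.sum_nonneg fun j _ => hnonneg j i
    linarith
  have hfiltereq : Finset.univ.filter (fun i => 0 < d i)
      = Finset.univ.filter (fun i => ¬ d i = 0) := by
    refine Finset.filter_congr fun i _ => ?_
    have := hdnonneg i
    constructor
    · intro h; exact ne_of_gt h
    · intro h; exact lt_of_le_of_ne this (Ne.symm h)
  have hsplit := Finset.sum_filter_add_sum_filter_not Finset.univ (fun i => d i = 0)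
    (fun i => (d i - 1) * (d i - 2))
  have hzero : ∑ i ∈ Finset.univ.filter (fun i => d i = 0), (d i - 1) * (d i - 2)
      = 2 * v := by
    calc ∑ i ∈ Finset.univ.filter (fun i => d i = 0), (d i - 1) * (d i - 2)
        = ∑ _i ∈ Finset.univ.filter (fun i => d i = 0), (2 : ℤ) := by
          refine Finset.sum_congr rfl fun i hi => ?_
          rw [(Finset.mem_filter.mp hi).2]; ring
      _ = 2 * v := by
          rw [Finset.sum_const, hv, nsmul_eq_mul]; ring
  have htotal : ∑ i, (d i - 1) * (d i - 2)
      = (∑ i, d i * d i) - 3 * (∑ i, d i) + 2 * n := by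
    have h' : ∀ i, (d i - 1) * (d i - 2) = d i * d i - 3 * d i + 2 := fun i => by ring
    rw [Finset.sum_congr rfl fun i _ => h' i]
    rw [Finset.sum_add_distrib, Finset.sum_sub_distrib, ← Finset.mul_sum, Finset.sum_const,
      Finset.card_univ, Fintype.card_fin, nsmul_eq_mul]
    ring
  have hsumdtot : ∑ i, d i = 2 * e := by
    calc ∑ i, d i = ∑ i : Fin n, ((∑ j, N i j) + (∑ j, N j i)) :=
          Finset.sum_congr rfl fun i _ => hd i
      _ = (∑ i : Fin n, ∑ j, N i j) + ∑ i : Fin n, ∑ j, N j i := Finset.sum_add_distrib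
      _ = 2 * e := by rw [← he, ← heT]; ring
  have hS : ∑ i ∈ Finset.univ.filter (fun i => 0 < d i), (d i - 1) * (d i - 2)
      = (∑ i, d i * d i) - 6 * e + 2 * n - 2 * v := by
    rw [hfiltereq]
    have := hsplit
    rw [hzero, htotal, hsumdtot] at this
    linarith
  -- final assembly
  rw [hkey, htrM, htrMM]
  have haa : ∑ i, (N * Nᵀ) i i * (N * Nᵀ) i i
      = ∑ i, (∑ j, N i j) * (∑ j, N i j) := by
    refine Finset.sum_congr rfl fun i _ => by rw [hPdiag i]
  have hbb : ∑ k, (∑ i, N i k) * (∑ j, N j k) = ∑ i, (∑ j, N j i) * (∑ j, N j i) := rfl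
  rw [htrPP, hdss1, haa, hite]
  rw [hcols, hPdiagsum] at hdss2
  rw [hbb] at hdss2
  rw [hS]
  linarith [hsumd, hdss2]
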